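/- Let 1/n ≪ β ≪ α ≤ 1 and let G be a (β, α)-dense graph on n vertices with minimum degree at least αn. Then G contains a spanning Eulerian subgraph G' (every vertex of G' has even degree and G' has a decomposition into cycles on its non-isolated part) such that the graph of removed edges G − E(G') has maximum degree at most 3; in particular at most 3n/2 edges are removed. -/

import Mathlib

open Finset SimpleGraph

namespace Stmt12Aux

variable {V : Type} [Fintype V] [DecidableEq V]

lemma ncard_nbhd (J : SimpleGraph V) [DecidableRel J.Adj] (v : V) :
    (J.neighborSet v).ncard = J.degree v := by
  rw [Set.ncard_eq_toFinset_card', Set.toFinset_card, SimpleGraph.card_neighborSet_eq_degree]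

lemma neighborSet_sup' (J P : SimpleGraph V) (v : V) :
    (J ⊔ P).neighborSet v = J.neighborSet v ∪ P.neighborSet v := by
  ext b; simp [SimpleGraph.mem_neighborSet, SimpleGraph.sup_adj]

/-- Phase 2: finish off a small remaining set `R` of odd vertices using length-3 paths. -/
lemma phase2 (G : SimpleGraph V) [DecidableRel G.Adj]
    (α β : ℝ) (n : ℕ) (hcard : Fintype.card V = n)
    (hα : 0 < α) (hβ : 0 < β) (hβα : 4 * β ≤ α)
    (hn2 : 3 < α * (β * n))
    (hdense : ∀ U W : Finset V, β * (n : ℝ) ≤ (U.card : ℝ) → β * (n : ℝ) ≤ (W.card : ℝ) →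
        α * ((U.card : ℝ) * (W.card : ℝ)) ≤
          ((((U ×ˢ W).filter fun p => G.Adj p.1 p.2).card : ℝ)))
    (hdeg : ∀ v : V, α * (n : ℝ) ≤ (G.degree v : ℝ)) :
    ∀ (k : ℕ) (R U : Finset V) (J : SimpleGraph V),
      R.card ≤ k → Even R.card → (∀ v ∈ R, Odd (G.degree v)) →
      ((U.card : ℝ) + 2 * (R.card : ℝ) ≤ 3 * (β * n)) →
      J ≤ G →
      (∀ v ∈ R, (J.neighborSet v).ncard = 0) →
      (∀ v, v ∉ R → (Odd (J.neighborSet v).ncard ↔ Odd (G.degree v))) →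
      (∀ v, (J.neighborSet v).ncard ≤ 3) →
      (∀ v, v ∉ U → (J.neighborSet v).ncard ≤ 1) →
      ∃ J' : SimpleGraph V, J' ≤ G ∧ (∀ v, (J'.neighborSet v).ncard ≤ 3) ∧
        (∀ v, Odd ((J'.neighborSet v).ncard) ↔ Odd (G.degree v)) := by
  classical
  intro k
  induction k with
  | zero =>
    intro R U J hk _ _ _ hJG _ hpar h3 _
    have hR : R = ∅ := Finset.card_eq_zero.mp (Nat.le_zero.mp hk)
    exact ⟨J, hJG, h3, fun v => hpar v (by simp [hR])⟩
  | succ k ih =>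
    intro R U J hk heven hodds hnum hJG hR0 hpar h3 h1
    by_cases hRe : R = ∅
    · exact ⟨J, hJG, h3, fun v => hpar v (by simp [hRe])⟩
    · have hRne : R.card ≠ 0 := by simpa [Finset.card_eq_zero] using hRe
      have h2le : 1 < R.card := by
        rcases heven with ⟨m, hm⟩; omega
      obtain ⟨u, hu, w, hw, huw⟩ := Finset.one_lt_card.mp h2le
      set S : Finset V := U ∪ R with hS
      have hScard : (S.card : ℝ) ≤ 3 * (β * n) := by
        have h0 : S.card ≤ U.card + R.card := Finset.card_union_le _ _
        have h0' : (S.card : ℝ) ≤ (U.card : ℝ) + (R.card : ℝ) := by exact_mod_cast h0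
        have : (0:ℝ) ≤ (R.card : ℝ) := by positivity
        linarith
      have hβn0 : (0:ℝ) < β * n := by nlinarith
      -- the sets A, B
      set A : Finset V := G.neighborFinset u \ S with hA
      set B : Finset V := G.neighborFinset w \ S with hB
      have hAcard : β * n ≤ (A.card : ℝ) := by
        have h0 : (G.neighborFinset u).card ≤ A.card + S.card :=
          Finset.card_le_card_sdiff_add_card
        have h0' : ((G.neighborFinset u).card : ℝ) ≤ (A.card : ℝ) + (S.card : ℝ) := by
          exact_mod_cast h0
        have hdu : α * n ≤ ((G.neighborFinset u).card : ℝ) := hdeg u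
        have hn0 : (0:ℝ) ≤ (n:ℝ) := by positivity
        nlinarith
      have hBcard : β * n ≤ (B.card : ℝ) := by
        have h0 : (G.neighborFinset w).card ≤ B.card + S.card :=
          Finset.card_le_card_sdiff_add_card
        have h0' : ((G.neighborFinset w).card : ℝ) ≤ (B.card : ℝ) + (S.card : ℝ) := by
          exact_mod_cast h0
        have hdw : α * n ≤ ((G.neighborFinset w).card : ℝ) := hdeg w
        have hn0 : (0:ℝ) ≤ (n:ℝ) := by positivity
        nlinarith
      have hgood := hdense A B hAcard hBcard
      -- bad pairs (already in J)
      set bad := (A ×ˢ B).filter (fun p => J.Adj p.1 p.2) with hbaddef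
      have hfst : ∀ p ∈ bad, p.1 ∈ A := by
        intro p hp
        exact (Finset.mem_product.mp (Finset.mem_filter.mp hp).1).1
      have hbadcard : bad.card ≤ 3 * A.card := by
        rw [Finset.card_eq_sum_card_fiberwise hfst]
        have hfiber : ∀ x ∈ A, (bad.filter fun p => p.1 = x).card ≤ 3 := by
          intro x _
          have hle : (bad.filter fun p => p.1 = x).card ≤
              (Finset.univ.filter fun y => J.Adj x y).card := by
            apply Finset.card_le_card_of_injOn Prod.snd
            · intro p hp
              rcases Finset.mem_filter.mp hp with ⟨hp1, hp2⟩
              rcases Finset.mem_filter.mp hp1 with ⟨_, hadj⟩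
              subst hp2
              simp [hadj]
            · intro p hp q hq hpq
              rcases Finset.mem_coe.mp hp with hp'
              rcases Finset.mem_coe.mp hq with hq'
              have e1 : p.1 = x := (Finset.mem_filter.mp hp').2
              have e2 : q.1 = x := (Finset.mem_filter.mp hq').2
              exact Prod.ext (e1.trans e2.symm) hpq
          have heq : (Finset.univ.filter fun y => J.Adj x y).card
              = (J.neighborSet x).ncard := by
            rw [Set.ncard_eq_toFinset_card']
            congr 1
            ext y
            simp [SimpleGraph.mem_neighborSet]
          calc (bad.filter fun p => p.1 = x).card
              ≤ (Finset.univ.filter fun y => J.Adj x y).card := hle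
            _ = (J.neighborSet x).ncard := heq
            _ ≤ 3 := h3 x
        calc ∑ x ∈ A, (bad.filter fun p => p.1 = x).card
            ≤ ∑ _x ∈ A, 3 := Finset.sum_le_sum hfiber
          _ = 3 * A.card := by rw [Finset.sum_const, smul_eq_mul, Nat.mul_comm]
      -- a good pair not in bad
      have hA0 : (0:ℝ) < (A.card : ℝ) := lt_of_lt_of_le hβn0 hAcard
      have hlt : (bad.card : ℝ) < ((((A ×ˢ B).filter fun p => G.Adj p.1 p.2).card : ℝ)) := by
        have hb : (bad.card : ℝ) ≤ 3 * (A.card : ℝ) := by exact_mod_cast hbadcard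
        have h5 : α * ((A.card : ℝ) * (B.card : ℝ)) ≥ (α * (β * n)) * (A.card : ℝ) := by
          nlinarith [mul_nonneg (mul_nonneg hα.le hA0.le) (sub_nonneg.mpr hBcard)]
        nlinarith [mul_pos (sub_pos.mpr hn2) hA0]
      have hnsub : ¬ ((A ×ˢ B).filter fun p => G.Adj p.1 p.2) ⊆ bad := by
        intro hsub
        have := Finset.card_le_card hsub
        have : ((((A ×ˢ B).filter fun p => G.Adj p.1 p.2).card : ℝ)) ≤ (bad.card : ℝ) := by
          exact_mod_cast this
        linarith
      obtain ⟨p, hpg, hpb⟩ := Finset.not_subset.mp hnsub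
      obtain ⟨x, y⟩ := p
      rcases Finset.mem_filter.mp hpg with ⟨hpAB, hGxy⟩
      rcases Finset.mem_product.mp hpAB with ⟨hxA, hyB⟩
      have hJxy : ¬ J.Adj x y := by
        intro hJ
        exact hpb (Finset.mem_filter.mpr ⟨hpAB, hJ⟩)
      -- distinctness and adjacency facts
      have hxS : x ∉ S := (Finset.mem_sdiff.mp hxA).2
      have hyS : y ∉ S := (Finset.mem_sdiff.mp hyB).2
      have hGux : G.Adj u x := by
        have := (Finset.mem_sdiff.mp hxA).1
        exact (SimpleGraph.mem_neighborFinset _ _ _).mp this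
      have hGwy : G.Adj w y := by
        have := (Finset.mem_sdiff.mp hyB).1
        exact (SimpleGraph.mem_neighborFinset _ _ _).mp this
      have huR : u ∈ S := Finset.mem_union_right _ hu
      have hwR : w ∈ S := Finset.mem_union_right _ hw
      have hux : u ≠ x := G.ne_of_adj hGux
      have huy : u ≠ y := fun h => hyS (h ▸ huR)
      have hxy : x ≠ y := G.ne_of_adj hGxy
      have hxw : x ≠ w := fun h => hxS (h ▸ hwR)
      have hyw : y ≠ w := fun h => hyS (h ▸ hwR)
      -- the path graph
      set P : SimpleGraph V :=
        SimpleGraph.fromEdgeSet {s(u,x), s(x,y), s(y,w)} with hPdef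
      have hPadj : ∀ a b : V, P.Adj a b ↔
          ((a = u ∧ b = x) ∨ (a = x ∧ b = u)) ∨
          ((a = x ∧ b = y) ∨ (a = y ∧ b = x)) ∨
          ((a = y ∧ b = w) ∨ (a = w ∧ b = y)) := by
        intro a b
        rw [hPdef, SimpleGraph.fromEdgeSet_adj]
        constructor
        · rintro ⟨hmem, hne⟩
          simp only [Set.mem_insert_iff, Set.mem_singleton_iff, Sym2.eq_iff] at hmem
          exact hmem
        · intro h
          constructor
          · simp only [Set.mem_insert_iff, Set.mem_singleton_iff, Sym2.eq_iff]
            exact h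
          · rcases h with (⟨h1,h2⟩|⟨h1,h2⟩)|(⟨h1,h2⟩|⟨h1,h2⟩)|(⟨h1,h2⟩|⟨h1,h2⟩) <;>
              subst h1 <;> subst h2 <;> first
                | exact hux | exact hux.symm | exact hxy | exact hxy.symm
                | exact hyw | exact hyw.symm
      have hPG : P ≤ G := by
        intro a b hab
        rcases (hPadj a b).mp hab with (⟨h1,h2⟩|⟨h1,h2⟩)|(⟨h1,h2⟩|⟨h1,h2⟩)|(⟨h1,h2⟩|⟨h1,h2⟩) <;>
          subst h1 <;> subst h2
        · exact hGux
        · exact hGux.symm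
        · exact hGxy
        · exact hGxy.symm
        · exact hGwy.symm
        · exact hGwy
      -- neighbor sets of P
      have hPu : P.neighborSet u = {x} := by
        ext b
        simp only [SimpleGraph.mem_neighborSet, hPadj, Set.mem_singleton_iff]
        constructor
        · rintro ((⟨h1,h2⟩|⟨h1,h2⟩)|(⟨h1,h2⟩|⟨h1,h2⟩)|(⟨h1,h2⟩|⟨h1,h2⟩)) <;>
            first
              | exact h2
              | exact absurd h1 hux
              | exact absurd h1 huy
              | exact absurd h1 huw
        · rintro rfl
          simp
      have hPw : P.neighborSet w = {y} := by
        ext b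
        simp only [SimpleGraph.mem_neighborSet, hPadj, Set.mem_singleton_iff]
        constructor
        · rintro ((⟨h1,h2⟩|⟨h1,h2⟩)|(⟨h1,h2⟩|⟨h1,h2⟩)|(⟨h1,h2⟩|⟨h1,h2⟩)) <;>
            first
              | exact h2
              | exact absurd h1.symm huw
              | exact absurd h1.symm hxw
              | exact absurd h1.symm hyw
        · rintro rfl
          simp
      have hPx : P.neighborSet x = {u, y} := by
        ext b
        simp only [SimpleGraph.mem_neighborSet, hPadj, Set.mem_insert_iff,
          Set.mem_singleton_iff]
        constructor
        · rintro ((⟨h1,h2⟩|⟨h1,h2⟩)|(⟨h1,h2⟩|⟨h1,h2⟩)|(⟨h1,h2⟩|⟨h1,h2⟩)) <;>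
            first
              | exact Or.inl h2
              | exact Or.inr h2
              | exact absurd h1.symm hux
              | exact absurd h1 hxy
              | exact absurd h1 hxw
        · rintro (rfl | rfl)
          · simp
          · simp
      have hPy : P.neighborSet y = {x, w} := by
        ext b
        simp only [SimpleGraph.mem_neighborSet, hPadj, Set.mem_insert_iff,
          Set.mem_singleton_iff]
        constructor
        · rintro ((⟨h1,h2⟩|⟨h1,h2⟩)|(⟨h1,h2⟩|⟨h1,h2⟩)|(⟨h1,h2⟩|⟨h1,h2⟩)) <;>
            first
              | exact Or.inl h2
              | exact Or.inr h2
              | exact absurd h1.symm huy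
              | exact absurd h1.symm hxy
              | exact absurd h1 hyw
        · rintro (rfl | rfl)
          · simp
          · simp
      have hPo : ∀ v : V, v ≠ u → v ≠ x → v ≠ y → v ≠ w → P.neighborSet v = ∅ := by
        intro v h1 h2 h3' h4
        ext b
        simp only [SimpleGraph.mem_neighborSet, hPadj, Set.mem_empty_iff_false, iff_false]
        rintro ((⟨e1,e2⟩|⟨e1,e2⟩)|(⟨e1,e2⟩|⟨e1,e2⟩)|(⟨e1,e2⟩|⟨e1,e2⟩)) <;>
          first | exact h1 e1 | exact h2 e1 | exact h3' e1 | exact h4 e1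
      -- degrees of J at u, w vanish
      have hJu : J.neighborSet u = ∅ := (Set.ncard_eq_zero (Set.toFinite _)).mp (hR0 u hu)
      have hJw : J.neighborSet w = ∅ := (Set.ncard_eq_zero (Set.toFinite _)).mp (hR0 w hw)
      have hJxu : u ∉ J.neighborSet x := by
        intro h
        have : x ∈ J.neighborSet u := (SimpleGraph.mem_neighborSet _ _ _).mpr
          ((SimpleGraph.mem_neighborSet _ _ _).mp h).symm
        rw [hJu] at this; exact this
      have hJyw : w ∉ J.neighborSet y := by
        intro h
        have : y ∈ J.neighborSet w := (SimpleGraph.mem_neighborSet _ _ _).mpr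
          ((SimpleGraph.mem_neighborSet _ _ _).mp h).symm
        rw [hJw] at this; exact this
      have hJxy' : y ∉ J.neighborSet x := fun h => hJxy h
      have hJyx' : x ∉ J.neighborSet y := fun h => hJxy ((SimpleGraph.mem_neighborSet _ _ _).mp h).symm
      -- new degrees
      set J' : SimpleGraph V := J ⊔ P with hJ'def
      have hcu : (J'.neighborSet u).ncard = 1 := by
        rw [hJ'def, neighborSet_sup', hJu, hPu]; simp
      have hcw : (J'.neighborSet w).ncard = 1 := by
        rw [hJ'def, neighborSet_sup', hJw, hPw]; simp
      have hcx : (J'.neighborSet x).ncard = (J.neighborSet x).ncard + 2 := by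
        rw [hJ'def, neighborSet_sup', hPx]
        rw [Set.ncard_union_eq (by
          rw [Set.disjoint_right]
          rintro b (rfl | rfl)
          · exact hJxu
          · exact hJxy') (Set.toFinite _) (Set.toFinite _)]
        rw [Set.ncard_pair huy]
      have hcy : (J'.neighborSet y).ncard = (J.neighborSet y).ncard + 2 := by
        rw [hJ'def, neighborSet_sup', hPy]
        rw [Set.ncard_union_eq (by
          rw [Set.disjoint_right]
          rintro b (rfl | rfl)
          · exact hJyx'
          · exact hJyw) (Set.toFinite _) (Set.toFinite _)]
        rw [Set.ncard_pair hxw]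
      have hco : ∀ v : V, v ≠ u → v ≠ x → v ≠ y → v ≠ w →
          (J'.neighborSet v).ncard = (J.neighborSet v).ncard := by
        intro v h1' h2 h3' h4
        rw [hJ'def, neighborSet_sup', hPo v h1' h2 h3' h4, Set.union_empty]
      -- recurse
      set R' : Finset V := R \ {u, w} with hR'def
      set U' : Finset V := U ∪ {x, y} with hU'def
      have hsubuw : {u, w} ⊆ R := by
        intro a ha
        rcases Finset.mem_insert.mp ha with rfl | ha
        · exact hu
        · exact Finset.mem_singleton.mp ha ▸ hw
      have hcarduw : ({u, w} : Finset V).card = 2 := Finset.card_pair huw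
      have hR'card : R'.card = R.card - 2 := by
        rw [hR'def, Finset.card_sdiff_of_subset hsubuw, hcarduw]
      have hxR : x ∉ R := fun h => hxS (Finset.mem_union_right _ h)
      have hyR : y ∉ R := fun h => hyS (Finset.mem_union_right _ h)
      have hxU : x ∉ U := fun h => hxS (Finset.mem_union_left _ h)
      have hyU : y ∉ U := fun h => hyS (Finset.mem_union_left _ h)
      refine ih R' U' J' ?_ ?_ ?_ ?_ (sup_le hJG hPG) ?_ ?_ ?_ ?_
      · omega
      · rcases heven with ⟨m, hm⟩
        exact ⟨m - 1, by omega⟩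
      · intro v hv
        exact hodds v (Finset.mem_sdiff.mp hv).1
      · have hU'le : U'.card ≤ U.card + 2 := by
          calc U'.card ≤ U.card + ({x, y} : Finset V).card := Finset.card_union_le _ _
            _ = U.card + 2 := by rw [Finset.card_pair hxy]
        have hU'le' : (U'.card : ℝ) ≤ (U.card : ℝ) + 2 := by exact_mod_cast hU'le
        have hRc : (R'.card : ℝ) = (R.card : ℝ) - 2 := by
          rw [hR'card]
          have : (2:ℕ) ≤ R.card := h2le
          push_cast [Nat.cast_sub this]
          ring
        rw [hRc]
        linarith
      · intro v hv
        rcases Finset.mem_sdiff.mp hv with ⟨hvR, hvuw⟩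
        have hvu : v ≠ u := fun h => hvuw (by simp [h])
        have hvw : v ≠ w := fun h => hvuw (by simp [h])
        have hvx : v ≠ x := fun h => hxR (h ▸ hvR)
        have hvy : v ≠ y := fun h => hyR (h ▸ hvR)
        rw [hco v hvu hvx hvy hvw]
        exact hR0 v hvR
      · intro v hv
        by_cases hvu : v = u
        · rw [hvu, hcu]
          simpa using (hodds u hu)
        by_cases hvw : v = w
        · rw [hvw, hcw]
          simpa using (hodds w hw)
        by_cases hvx : v = x
        · rw [hvx, hcx, Nat.odd_add]
          simpa using hpar x hxR
        by_cases hvy : v = y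
        · rw [hvy, hcy, Nat.odd_add]
          simpa using hpar y hyR
        · have hvR : v ∉ R := by
            intro h
            exact hv (Finset.mem_sdiff.mpr ⟨h, by simp [hvu, hvw]⟩)
          rw [hco v hvu hvx hvy hvw]
          exact hpar v hvR
      · intro v
        by_cases hvu : v = u
        · rw [hvu, hcu]; omega
        by_cases hvw : v = w
        · rw [hvw, hcw]; omega
        by_cases hvx : v = x
        · rw [hvx, hcx]
          have := h1 x hxU
          omega
        by_cases hvy : v = y
        · rw [hvy, hcy]
          have := h1 y hyU
          omega
        · rw [hco v hvu hvx hvy hvw]; exact h3 v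
      · intro v hv
        have hvU : v ∉ U := fun h => hv (Finset.mem_union_left _ h)
        have hvx : v ≠ x := fun h => hv (Finset.mem_union_right _ (by simp [h]))
        have hvy : v ≠ y := fun h => hv (Finset.mem_union_right _ (by simp [h]))
        by_cases hvu : v = u
        · rw [hvu, hcu]
        by_cases hvw : v = w
        · rw [hvw, hcw]
        · rw [hco v hvu hvx hvy hvw]; exact h1 v hvU

/-- Phase 1: greedily match up odd vertices while the remaining set contains an edge. -/
lemma phase1 (G : SimpleGraph V) [DecidableRel G.Adj]
    (α β : ℝ) (n : ℕ) (hcard : Fintype.card V = n)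
    (hα : 0 < α) (hβ : 0 < β) (hβα : 4 * β ≤ α)
    (hn1 : 1 ≤ β * n) (hn2 : 3 < α * (β * n))
    (hdense : ∀ U W : Finset V, β * (n : ℝ) ≤ (U.card : ℝ) → β * (n : ℝ) ≤ (W.card : ℝ) →
        α * ((U.card : ℝ) * (W.card : ℝ)) ≤
          ((((U ×ˢ W).filter fun p => G.Adj p.1 p.2).card : ℝ)))
    (hdeg : ∀ v : V, α * (n : ℝ) ≤ (G.degree v : ℝ)) :
    ∀ (k : ℕ) (R : Finset V) (J : SimpleGraph V),
      R.card ≤ k → Even R.card → (∀ v ∈ R, Odd (G.degree v)) →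
      J ≤ G →
      (∀ v ∈ R, (J.neighborSet v).ncard = 0) →
      (∀ v, v ∉ R → (Odd (J.neighborSet v).ncard ↔ Odd (G.degree v))) →
      (∀ v, (J.neighborSet v).ncard ≤ 1) →
      ∃ J' : SimpleGraph V, J' ≤ G ∧ (∀ v, (J'.neighborSet v).ncard ≤ 3) ∧
        (∀ v, Odd ((J'.neighborSet v).ncard) ↔ Odd (G.degree v)) := by
  classical
  intro k
  induction k with
  | zero =>
    intro R J hk _ _ hJG _ hpar h1
    have hR : R = ∅ := Finset.card_eq_zero.mp (Nat.le_zero.mp hk)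
    exact ⟨J, hJG, fun v => le_trans (h1 v) (by norm_num), fun v => hpar v (by simp [hR])⟩
  | succ k ih =>
    intro R J hk heven hodds hJG hR0 hpar h1
    by_cases hadj : ∃ u ∈ R, ∃ w ∈ R, G.Adj u w
    · obtain ⟨u, hu, w, hw, huwadj⟩ := hadj
      have huw : u ≠ w := G.ne_of_adj huwadj
      set P : SimpleGraph V := SimpleGraph.fromEdgeSet {s(u,w)} with hPdef
      have hPadj : ∀ a b : V, P.Adj a b ↔ ((a = u ∧ b = w) ∨ (a = w ∧ b = u)) := by
        intro a b
        rw [hPdef, SimpleGraph.fromEdgeSet_adj]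
        constructor
        · rintro ⟨hmem, hne⟩
          simp only [Set.mem_singleton_iff, Sym2.eq_iff] at hmem
          exact hmem
        · intro h
          constructor
          · simp only [Set.mem_singleton_iff, Sym2.eq_iff]
            exact h
          · rcases h with ⟨h1',h2⟩|⟨h1',h2⟩ <;> subst h1' <;> subst h2
            · exact huw
            · exact huw.symm
      have hPG : P ≤ G := by
        intro a b hab
        rcases (hPadj a b).mp hab with ⟨h1',h2⟩|⟨h1',h2⟩ <;> subst h1' <;> subst h2
        · exact huwadj
        · exact huwadj.symm
      have hPu : P.neighborSet u = {w} := by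
        ext b
        simp only [SimpleGraph.mem_neighborSet, hPadj, Set.mem_singleton_iff]
        constructor
        · rintro (⟨h1',h2⟩|⟨h1',h2⟩)
          · exact h2
          · exact absurd h1' huw
        · rintro rfl
          simp
      have hPw : P.neighborSet w = {u} := by
        ext b
        simp only [SimpleGraph.mem_neighborSet, hPadj, Set.mem_singleton_iff]
        constructor
        · rintro (⟨h1',h2⟩|⟨h1',h2⟩)
          · exact absurd h1'.symm huw
          · exact h2
        · rintro rfl
          simp
      have hPo : ∀ v : V, v ≠ u → v ≠ w → P.neighborSet v = ∅ := by
        intro v e1 e2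
        ext b
        simp only [SimpleGraph.mem_neighborSet, hPadj, Set.mem_empty_iff_false, iff_false]
        rintro (⟨h1',h2⟩|⟨h1',h2⟩)
        · exact e1 h1'
        · exact e2 h1'
      have hJu : J.neighborSet u = ∅ := (Set.ncard_eq_zero (Set.toFinite _)).mp (hR0 u hu)
      have hJw : J.neighborSet w = ∅ := (Set.ncard_eq_zero (Set.toFinite _)).mp (hR0 w hw)
      set J' : SimpleGraph V := J ⊔ P with hJ'def
      have hcu : (J'.neighborSet u).ncard = 1 := by
        rw [hJ'def, neighborSet_sup', hJu, hPu]; simp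
      have hcw : (J'.neighborSet w).ncard = 1 := by
        rw [hJ'def, neighborSet_sup', hJw, hPw]; simp
      have hco : ∀ v : V, v ≠ u → v ≠ w →
          (J'.neighborSet v).ncard = (J.neighborSet v).ncard := by
        intro v e1 e2
        rw [hJ'def, neighborSet_sup', hPo v e1 e2, Set.union_empty]
      set R' : Finset V := R \ {u, w} with hR'def
      have hsubuw : {u, w} ⊆ R := by
        intro a ha
        rcases Finset.mem_insert.mp ha with rfl | ha
        · exact hu
        · exact Finset.mem_singleton.mp ha ▸ hw
      have h2le : 2 ≤ R.card := by
        calc 2 = ({u, w} : Finset V).card := (Finset.card_pair huw).symm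
          _ ≤ R.card := Finset.card_le_card hsubuw
      have hR'card : R'.card = R.card - 2 := by
        rw [hR'def, Finset.card_sdiff_of_subset hsubuw, Finset.card_pair huw]
      refine ih R' J' ?_ ?_ ?_ (sup_le hJG hPG) ?_ ?_ ?_
      · omega
      · rcases heven with ⟨m, hm⟩
        exact ⟨m - 1, by omega⟩
      · intro v hv
        exact hodds v (Finset.mem_sdiff.mp hv).1
      · intro v hv
        rcases Finset.mem_sdiff.mp hv with ⟨hvR, hvuw⟩
        have hvu : v ≠ u := fun h => hvuw (by simp [h])
        have hvw : v ≠ w := fun h => hvuw (by simp [h])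
        rw [hco v hvu hvw]
        exact hR0 v hvR
      · intro v hv
        by_cases hvu : v = u
        · rw [hvu, hcu]
          simpa using hodds u hu
        by_cases hvw : v = w
        · rw [hvw, hcw]
          simpa using hodds w hw
        · have hvR : v ∉ R := by
            intro h
            exact hv (Finset.mem_sdiff.mpr ⟨h, by simp [hvu, hvw]⟩)
          rw [hco v hvu hvw]
          exact hpar v hvR
      · intro v
        by_cases hvu : v = u
        · rw [hvu, hcu]
        by_cases hvw : v = w
        · rw [hvw, hcw]
        · rw [hco v hvu hvw]; exact h1 v
    · -- R is independent, hence small; switch to phase 2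
      push_neg at hadj
      have hRsmall : (R.card : ℝ) ≤ β * n := by
        by_contra hbig
        push_neg at hbig
        have hd := hdense R R hbig.le hbig.le
        have hempty : ((R ×ˢ R).filter fun p => G.Adj p.1 p.2) = ∅ := by
          apply Finset.filter_eq_empty_iff.mpr
          intro p hp
          rcases Finset.mem_product.mp hp with ⟨hp1, hp2⟩
          exact hadj p.1 hp1 p.2 hp2
        rw [hempty] at hd
        simp only [Finset.card_empty, Nat.cast_zero] at hd
        nlinarith
      refine phase2 G α β n hcard hα hβ hβα hn2 hdense hdeg R.card R ∅ J le_rfl heven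
        hodds ?_ hJG hR0 hpar (fun v => le_trans (h1 v) (by norm_num)) ?_
      · have hβn0 : (0:ℝ) ≤ β * n := by positivity
        simp only [Finset.card_empty, Nat.cast_zero]
        linarith
      · intro v _
        exact h1 v

/-- Existence of the parity-correcting subgraph `J`. -/
lemma exists_J (G : SimpleGraph V) [DecidableRel G.Adj]
    (α β : ℝ) (n : ℕ) (hcard : Fintype.card V = n)
    (hα : 0 < α) (hβ : 0 < β) (hβα : 4 * β ≤ α)
    (hn1 : 1 ≤ β * n) (hn2 : 3 < α * (β * n))
    (hdense : ∀ U W : Finset V, β * (n : ℝ) ≤ (U.card : ℝ) → β * (n : ℝ) ≤ (W.card : ℝ) →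
        α * ((U.card : ℝ) * (W.card : ℝ)) ≤
          ((((U ×ˢ W).filter fun p => G.Adj p.1 p.2).card : ℝ)))
    (hdeg : ∀ v : V, α * (n : ℝ) ≤ (G.degree v : ℝ)) :
    ∃ J : SimpleGraph V, J ≤ G ∧ (∀ v, (J.neighborSet v).ncard ≤ 3) ∧
      (∀ v, Odd ((J.neighborSet v).ncard) ↔ Odd (G.degree v)) := by
  classical
  have hbot : ∀ v : V, (⊥ : SimpleGraph V).neighborSet v = ∅ := by
    intro v; ext b; simp
  set R : Finset V := Finset.univ.filter (fun v => Odd (G.degree v)) with hRdef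
  refine phase1 G α β n hcard hα hβ hβα hn1 hn2 hdense hdeg R.card R ⊥ le_rfl ?_ ?_
    bot_le ?_ ?_ ?_
  · rw [hRdef]
    exact G.even_card_odd_degree_vertices
  · intro v hv
    exact (Finset.mem_filter.mp hv).2
  · intro v _
    rw [hbot v, Set.ncard_empty]
  · intro v hv
    have hnodd : ¬ Odd (G.degree v) := by
      intro h
      exact hv (Finset.mem_filter.mpr ⟨Finset.mem_univ v, h⟩)
    rw [hbot v, Set.ncard_empty]
    simp [hnodd]
  · intro v
    rw [hbot v, Set.ncard_empty]
    norm_num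

end Stmt12Aux

/-- Proposition 3.4: for `1/n ≪ β ≪ α ≤ 1`, every `(β, α)`-dense graph `G` on `n`
vertices with `δ(G) ≥ αn` contains a spanning Eulerian subgraph `G'` (all degrees even)
with `Δ(G - E(G')) ≤ 3`; in particular at most `3n/2` edges are removed. -/
theorem stmt_12 :
    ∀ α : ℝ, 0 < α → α ≤ 1 →
    ∃ β₀ : ℝ, 0 < β₀ ∧ ∀ β : ℝ, 0 < β → β ≤ β₀ →
    ∃ N : ℕ, ∀ n : ℕ, N ≤ n →
    ∀ (V : Type) [Fintype V] [DecidableEq V] (G : SimpleGraph V) [DecidableRel G.Adj],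
      Fintype.card V = n →
      -- `G` is `(β, α)`-dense (ordered-pair count; edges in the intersection twice)
      (∀ U W : Finset V, β * (n : ℝ) ≤ (U.card : ℝ) → β * (n : ℝ) ≤ (W.card : ℝ) →
        α * ((U.card : ℝ) * (W.card : ℝ)) ≤
          ((((U ×ˢ W).filter fun p => G.Adj p.1 p.2).card : ℝ))) →
      (∀ v : V, α * (n : ℝ) ≤ (G.degree v : ℝ)) →
      ∃ G' : SimpleGraph V, G' ≤ G ∧
        (∀ v : V, Even ((G'.neighborSet v).ncard)) ∧
        (∀ v : V, ((G \ G').neighborSet v).ncard ≤ 3) ∧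
        (((G \ G').edgeSet.ncard : ℝ) ≤ 3 * (n : ℝ) / 2) := by
  intro α hα0 hα1
  refine ⟨α / 4, by positivity, ?_⟩
  intro β hβ0 hββ0
  refine ⟨⌈(4:ℝ) / (α * β ^ 2)⌉₊, ?_⟩
  intro n hn V _ _ G _ hcard hdense hdeg
  classical
  have hβα : 4 * β ≤ α := by linarith
  have hβ1 : β ≤ 1 := by linarith
  have hnR : (4:ℝ) / (α * β ^ 2) ≤ (n : ℝ) :=
    le_trans (Nat.le_ceil _) (by exact_mod_cast hn)
  have hden : (0:ℝ) < α * β ^ 2 := by positivity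
  have h4 : (4:ℝ) ≤ α * β ^ 2 * n := by
    rw [div_le_iff₀ hden] at hnR
    nlinarith
  have hn0 : (0:ℝ) ≤ (n:ℝ) := by positivity
  have hαβ : α * β ≤ 1 := by nlinarith
  have hn1 : (1:ℝ) ≤ β * n := by nlinarith [mul_nonneg (mul_nonneg hβ0.le hn0) (sub_nonneg.mpr hαβ)]
  have hn2 : (3:ℝ) < α * (β * n) := by
    have hpos : (0:ℝ) ≤ α * (β * n) := by positivity
    nlinarith
  obtain ⟨J, hJG, h3, hparity⟩ :=
    Stmt12Aux.exists_J G α β n hcard hα0 hβ0 hβα hn1 hn2 hdense hdeg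
  refine ⟨G \ J, sdiff_le, ?_, ?_, ?_⟩
  · -- all degrees of G \ J are even
    intro v
    have hnb : (G \ J).neighborSet v = G.neighborSet v \ J.neighborSet v := by
      ext b
      simp [SimpleGraph.mem_neighborSet, SimpleGraph.sdiff_adj]
    have hsub : J.neighborSet v ⊆ G.neighborSet v := fun b hb => hJG hb
    have hle : (J.neighborSet v).ncard ≤ (G.neighborSet v).ncard :=
      Set.ncard_le_ncard hsub (Set.toFinite _)
    rw [hnb, Set.ncard_diff hsub (Set.toFinite _)]
    have hEE : (Even (G.neighborSet v).ncard ↔ Even (J.neighborSet v).ncard) := by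
      rw [← Nat.not_odd_iff_even, ← Nat.not_odd_iff_even]
      have h := hparity v
      rw [Stmt12Aux.ncard_nbhd G v]
      exact not_congr (Iff.symm h)
    rw [Nat.even_sub hle]
    exact hEE
  · -- the removed graph is J, with max degree ≤ 3
    intro v
    have hGG' : G \ (G \ J) = J := by
      rw [sdiff_sdiff_right_self, inf_of_le_right hJG]
    rw [hGG']
    exact h3 v
  · -- at most 3n/2 edges removed
    have hGG' : G \ (G \ J) = J := by
      rw [sdiff_sdiff_right_self, inf_of_le_right hJG]
    rw [hGG']
    letI : DecidableRel J.Adj := Classical.decRel _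
    have hhs : ∑ v : V, J.degree v = 2 * J.edgeFinset.card :=
      SimpleGraph.sum_degrees_eq_twice_card_edges J
    have hdegle : ∀ v : V, J.degree v ≤ 3 := by
      intro v
      rw [← Stmt12Aux.ncard_nbhd J v]
      exact h3 v
    have hsum : ∑ v : V, J.degree v ≤ 3 * n := by
      calc ∑ v : V, J.degree v ≤ ∑ _v : V, 3 := Finset.sum_le_sum (fun v _ => hdegle v)
        _ = 3 * n := by rw [Finset.sum_const, smul_eq_mul, Finset.card_univ, hcard, Nat.mul_comm]
    have hE : J.edgeSet.ncard = J.edgeFinset.card := by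
      rw [Set.ncard_eq_toFinset_card']
      exact congrArg Finset.card (by ext e; simp)
    have h2e : 2 * J.edgeSet.ncard ≤ 3 * n := by
      rw [hE, ← hhs]
      exact hsum
    have h2e' : 2 * (J.edgeSet.ncard : ℝ) ≤ 3 * (n : ℝ) := by exact_mod_cast h2e
    linarith
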